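/- Let T be a finite simplicial complex of dimension n that is a pseudomanifold, and let σ be a simplex of codimension at least 2. Then the link of σ in T is itself a pseudomanifold (of dimension n − dim σ − 1): every simplex of the link is a face of a top-dimensional simplex of the link, and every codimension-1 simplex of the link is a face of exactly two top-dimensional simplices of the link. -/

import Mathlib

open Geometry

/-- `K` is an `n`-dimensional pseudomanifold: every face is contained in a face with `n + 1`
vertices, and every face with `n` vertices is contained in exactly two faces with `n + 1`
vertices. -/
def IsPseudomanifold {E : Type} [DecidableEq E] [AddCommGroup E] [Module ℝ E]
    (K : SimplicialComplex ℝ E) (n : ℕ) : Prop :=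
  (∀ s ∈ K.faces, s.card ≤ n + 1) ∧
  (∀ s ∈ K.faces, ∃ t ∈ K.faces, t.card = n + 1 ∧ s ⊆ t) ∧
  (∀ s ∈ K.faces, s.card = n → {t ∈ K.faces | t.card = n + 1 ∧ s ⊆ t}.ncard = 2)

/-- The link of a simplex `σ`: all faces disjoint from `σ` whose join with `σ` is a face. -/
def simplicialLink {E : Type} [DecidableEq E] [AddCommGroup E] [Module ℝ E]
    (K : SimplicialComplex ℝ E) (σ : Finset E) : Set (Finset E) :=
  {τ ∈ K.faces | Disjoint τ σ ∧ τ ∪ σ ∈ K.faces}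

/-- In a finite `n`-dimensional pseudomanifold, the link of a simplex `σ` of codimension at
least `2` is itself a pseudomanifold of dimension `n - dim σ - 1`: every face of the link is
contained in a face of the link with `n + 1 - σ.card` vertices (dimension `n - dim σ - 1`),
and every face of the link with `n - σ.card` vertices is contained in exactly two such
top-dimensional faces of the link. -/
theorem link_of_codim_ge_two_simplex_is_pseudomanifold
    {E : Type} [DecidableEq E] [AddCommGroup E] [Module ℝ E]
    (K : SimplicialComplex ℝ E) (n : ℕ)
    (hfin : K.faces.Finite) (hpm : IsPseudomanifold K n)
    (σ : Finset E) (hσ : σ ∈ K.faces) (hcodim : σ.card + 2 ≤ n + 1) :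
    (∀ τ ∈ simplicialLink K σ, τ.card ≤ n + 1 - σ.card) ∧
    (∀ τ ∈ simplicialLink K σ, ∃ t ∈ simplicialLink K σ, t.card = n + 1 - σ.card ∧ τ ⊆ t) ∧
    (∀ τ ∈ simplicialLink K σ, τ.card = n - σ.card →
      {t ∈ simplicialLink K σ | t.card = n + 1 - σ.card ∧ τ ⊆ t}.ncard = 2) := by
  obtain ⟨hbd, hmax, htwo⟩ := hpm
  have key : ∀ t ∈ K.faces, t.card = n + 1 → σ ⊆ t → t \ σ ∈ simplicialLink K σ ∧
      (t \ σ).card = n + 1 - σ.card := by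
    intro t ht hcard hsub
    have hne : t \ σ ≠ ∅ := by
      intro h
      have := Finset.card_sdiff_of_subset hsub
      rw [h] at this
      simp at this
      omega
    have hdiff : t \ σ ∈ K.faces := K.down_closed ht (Finset.sdiff_subset) (Finset.nonempty_iff_ne_empty.2 hne)
    have hun : t \ σ ∪ σ = t := Finset.sdiff_union_of_subset hsub
    refine ⟨⟨hdiff, Finset.sdiff_disjoint, by rw [hun]; exact ht⟩, ?_⟩
    rw [Finset.card_sdiff_of_subset hsub]; omega
  refine ⟨?_, ?_, ?_⟩
  · rintro τ ⟨hτ, hdisj, hτσ⟩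
    have := hbd _ hτσ
    rw [Finset.card_union_of_disjoint hdisj] at this
    omega
  · rintro τ ⟨hτ, hdisj, hτσ⟩
    obtain ⟨t, ht, hcard, hsub⟩ := hmax _ hτσ
    have hσt : σ ⊆ t := (Finset.union_subset_iff.1 hsub).2
    obtain ⟨hlink, hc⟩ := key t ht hcard hσt
    exact ⟨t \ σ, hlink, hc, fun x hx => Finset.mem_sdiff.2
      ⟨hsub (Finset.mem_union_left _ hx), fun hxσ => (Finset.disjoint_left.1 hdisj hx) hxσ⟩⟩
  · rintro τ ⟨hτ, hdisj, hτσ⟩ hcard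
    have hcardu : (τ ∪ σ).card = n := by
      rw [Finset.card_union_of_disjoint hdisj]; omega
    have h2 := htwo _ hτσ hcardu
    rw [← h2]
    have himg : {t ∈ simplicialLink K σ | t.card = n + 1 - σ.card ∧ τ ⊆ t} =
        (fun t => t \ σ) '' {t ∈ K.faces | t.card = n + 1 ∧ τ ∪ σ ⊆ t} := by
      ext t'
      constructor
      · rintro ⟨⟨ht', hdisj', hun⟩, hc', hτt'⟩
        refine ⟨t' ∪ σ, ⟨hun, ?_, Finset.union_subset_union_left hτt'⟩, ?_⟩
        · rw [Finset.card_union_of_disjoint hdisj']; omega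
        · simp [Finset.union_sdiff_right, Finset.sdiff_eq_self_of_disjoint hdisj']
      · rintro ⟨t, ⟨ht, hc, hsub⟩, rfl⟩
        have hσt : σ ⊆ t := (Finset.union_subset_iff.1 hsub).2
        obtain ⟨hlink, hc'⟩ := key t ht hc hσt
        exact ⟨hlink, hc', fun x hx => Finset.mem_sdiff.2
          ⟨hsub (Finset.mem_union_left _ hx), fun hxσ => (Finset.disjoint_left.1 hdisj hx) hxσ⟩⟩
    rw [himg]
    apply Set.ncard_image_of_injOn
    rintro t1 ⟨_, _, hs1⟩ t2 ⟨_, _, hs2⟩ h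
    have h1 : σ ⊆ t1 := (Finset.union_subset_iff.1 hs1).2
    have h2' : σ ⊆ t2 := (Finset.union_subset_iff.1 hs2).2
    have := congrArg (· ∪ σ) h
    simpa [Finset.sdiff_union_of_subset h1, Finset.sdiff_union_of_subset h2'] using this
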